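/- The Hodge star transform associated with a constant odd metric is an involution: let n ≥ 1 and let g be a real (2n)×(2n) matrix with gᵀ = -g and det g ≠ 0. For a Schwartz function f : (Fin (2n) → ℝ) → ℂ define (S f)(y) := (2π)^(-n) · √|det g| · ∫ f(z) · exp( -i ⟨z, g·y⟩ ) dz, the integral taken with respect to Lebesgue measure on Fin (2n) → ℝ, where ⟨·,·⟩ is the Euclidean inner product and g·y is the matrix-vector product. Then the defining integral of S(Sf) converges and S(S f)(y) = f(y) for every y. -/

import Mathlib

open MeasureTheory FourierTransform
open scoped RealInnerProductSpace

noncomputable section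

/-- The scalar content of the Hodge star operator `*_g` on `ℝ^{0|2n}`: the Fourier-type
transform `(S f)(y) = (2π)^{-n} √|det g| ∫ f(z) exp(-i ⟨z, g·y⟩) dz` in the even fiber
variables, for a constant odd (skew-symmetric) metric `g`. -/
def hodgeTransform {n : ℕ} (g : Matrix (Fin (2 * n)) (Fin (2 * n)) ℝ)
    (f : (Fin (2 * n) → ℝ) → ℂ) : (Fin (2 * n) → ℝ) → ℂ := fun y =>
  ((2 * Real.pi) ^ n)⁻¹ * (Real.sqrt |g.det| : ℝ) *
    ∫ z : Fin (2 * n) → ℝ,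
      f z * Complex.exp (-Complex.I * ((∑ i, z i * g.mulVec y i : ℝ) : ℂ))

lemma aux_integral_comp_cle {E : Type*} [NormedAddCommGroup E] [NormedSpace ℝ E]
    [MeasurableSpace E] [BorelSpace E] [FiniteDimensional ℝ E]
    (μ : Measure E) [μ.IsAddHaarMeasure] (L : E ≃L[ℝ] E) (h : E → ℂ) :
    ∫ v, h (L v) ∂μ = |LinearMap.det (L : E →ₗ[ℝ] E)|⁻¹ • ∫ w, h w ∂μ := by
  have hdet : LinearMap.det ((L : E →L[ℝ] E) : E →ₗ[ℝ] E) ≠ 0 := by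
    simpa using (LinearEquiv.isUnit_det' L.toLinearEquiv).ne_zero
  have hmap := Measure.map_linearMap_addHaar_eq_smul_addHaar μ hdet
  have h1 : ∫ v, h (L v) ∂μ = ∫ w, h w ∂(Measure.map L μ) :=
    (integral_map_equiv (L.toHomeomorph.toMeasurableEquiv) h).symm
  rw [h1]
  have h2 : Measure.map (⇑L) μ = Measure.map (((L : E →L[ℝ] E) : E →ₗ[ℝ] E) : E → E) μ := rfl
  rw [h2, hmap, integral_smul_measure, ENNReal.toReal_ofReal (abs_nonneg _), abs_inv]
  rfl

lemma aux_integral_pi {ι : Type*} [Fintype ι] (h : (ι → ℝ) → ℂ) :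
    ∫ z : ι → ℝ, h z = ∫ v : EuclideanSpace ℝ ι, h (((MeasurableEquiv.toLp 2 (ι → ℝ)).symm) v) :=
  ((EuclideanSpace.volume_preserving_symm_measurableEquiv_toLp ι).integral_comp
    (MeasurableEquiv.measurableEmbedding _) h).symm


/-- The Hodge star transform associated with a constant skew-symmetric non-degenerate
metric is an involution on Schwartz functions: the defining integral of `S (S f)`
converges, and `S (S f) = f`. -/
theorem hodgeTransform_involutive {n : ℕ} (hn : 1 ≤ n)
    (g : Matrix (Fin (2 * n)) (Fin (2 * n)) ℝ)
    (hskew : g.transpose = -g) (hdet : g.det ≠ 0)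
    (f : SchwartzMap (Fin (2 * n) → ℝ) ℂ) :
    (∀ y : Fin (2 * n) → ℝ, Integrable (fun z : Fin (2 * n) → ℝ =>
        hodgeTransform g (⇑f) z *
          Complex.exp (-Complex.I * ((∑ i, z i * g.mulVec y i : ℝ) : ℂ)))) ∧
    (∀ y : Fin (2 * n) → ℝ, hodgeTransform g (hodgeTransform g ⇑f) y = f y) := by
  classical
  set E := EuclideanSpace ℝ (Fin (2*n)) with hE
  let eqv : E ≃L[ℝ] (Fin (2*n) → ℝ) := EuclideanSpace.equiv (Fin (2*n)) ℝ
  let F : SchwartzMap E ℂ := SchwartzMap.compCLMOfContinuousLinearEquiv ℝ eqv f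
  have hF : ∀ v : E, F v = f (eqv v) := fun _ => rfl
  let Tlin : E →ₗ[ℝ] E :=
    (2*Real.pi)⁻¹ • ((eqv.toLinearEquiv.symm : (Fin (2*n) → ℝ) →ₗ[ℝ] E) ∘ₗ
      g.mulVecLin ∘ₗ (eqv.toLinearEquiv : E →ₗ[ℝ] (Fin (2*n) → ℝ)))
  have hpi : (0:ℝ) < 2 * Real.pi := by positivity
  have hTdet : LinearMap.det Tlin = ((2*Real.pi)⁻¹) ^ (2*n) * g.det := by
    rw [LinearMap.det_smul]
    congr 1
    · congr 1
      show Module.finrank ℝ (EuclideanSpace ℝ (Fin (2*n))) = 2*n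
      simp [finrank_euclideanSpace]
    · have hconj := LinearMap.det_conj g.mulVecLin eqv.toLinearEquiv.symm
      rw [LinearEquiv.symm_symm] at hconj
      rw [hconj, ← Matrix.toLin'_apply', LinearMap.det_toLin']
  have hTdet0 : LinearMap.det Tlin ≠ 0 := by
    rw [hTdet]; exact mul_ne_zero (pow_ne_zero _ (inv_ne_zero hpi.ne')) hdet
  let T : E ≃L[ℝ] E := (LinearMap.equivOfDetNeZero Tlin hTdet0).toContinuousLinearEquiv
  have hT : ∀ v : E, T v = Tlin v := fun _ => rfl
  have hTcoe : (T : E →ₗ[ℝ] E) = Tlin := rfl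
  have hinner : ∀ (v : E) (w : Fin (2*n) → ℝ), ⟪v, eqv.symm w⟫ = ∑ i, v i * w i := by
    intro v w
    simp [PiLp.inner_apply, RCLike.inner_apply, starRingEnd_apply, eqv]
    rw [PiLp.inner_apply]
    simp [mul_comm]
    exact Finset.sum_congr rfl fun i _ => mul_comm _ _
  have hTy' : ∀ v : E, Tlin v = (2*Real.pi)⁻¹ • eqv.symm (g.mulVec (eqv v)) := by
    intro v
    simp only [Tlin, LinearMap.smul_apply, LinearMap.coe_comp, Function.comp_apply,
      LinearEquiv.coe_coe]
    congr 1
  have hskew2 : ∀ (x z : Fin (2*n) → ℝ), (∑ i, g.mulVec x i * z i) = -∑ i, x i * g.mulVec z i := by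
    intro x z
    have h1 : (∑ i, x i * g.mulVec z i) = dotProduct x (g.mulVec z) := rfl
    have h2 : (∑ i, g.mulVec x i * z i) = dotProduct (g.mulVec x) z := rfl
    rw [h1, h2, Matrix.dotProduct_mulVec, ← Matrix.transpose_transpose g,
      Matrix.vecMul_transpose, Matrix.transpose_transpose, hskew, Matrix.neg_mulVec,
      neg_dotProduct, neg_neg]
  -- the key formula for the transform
  have key : ∀ y, hodgeTransform g ⇑f y =
      ((((2 * Real.pi) ^ n)⁻¹ : ℝ) : ℂ) * ((Real.sqrt |g.det| : ℝ) : ℂ) *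
        𝓕 (⇑F) (Tlin (eqv.symm y)) := by
    intro y
    show (((((2 * Real.pi) ^ n)⁻¹ : ℝ)) : ℂ) * ((Real.sqrt |g.det| : ℝ) : ℂ) *
      (∫ z : Fin (2*n) → ℝ, f z * Complex.exp (-Complex.I * ((∑ i, z i * g.mulVec y i : ℝ) : ℂ))) = _
    congr 1
    rw [Real.fourier_eq',
      aux_integral_pi (fun z => f z * Complex.exp (-Complex.I * ((∑ i, z i * g.mulVec y i : ℝ) : ℂ)))]
    have hTy : Tlin (eqv.symm y) = (2*Real.pi)⁻¹ • eqv.symm (g.mulVec y) := by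
      rw [hTy' (eqv.symm y), eqv.apply_symm_apply]
    refine congrArg (fun h : E → ℂ => ∫ v : E, h v) (funext fun v => ?_)
    have h1 : ⟪v, Tlin (eqv.symm y)⟫ = (2*Real.pi)⁻¹ * ∑ i, v i * g.mulVec y i := by
      rw [hTy, real_inner_smul_right, hinner]
    have h2 : f (((MeasurableEquiv.toLp 2 (Fin (2*n) → ℝ)).symm) v) = F v := rfl
    have h3 : ∀ x, ((MeasurableEquiv.toLp 2 (Fin (2*n) → ℝ)).symm) v x = v x := fun _ => rfl
    rw [h2, h1, smul_eq_mul, mul_comm]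
    congr 1
    congr 1
    push_cast
    simp only [h3]
    have : (Real.pi : ℂ) ≠ 0 := by exact_mod_cast Real.pi_ne_zero
    field_simp
  -- Schwartz representation of `hodgeTransform g f`
  let G2 : SchwartzMap (Fin (2*n) → ℝ) ℂ :=
    SchwartzMap.compCLMOfContinuousLinearEquiv ℝ (eqv.symm.trans T)
      (SchwartzMap.fourierTransformCLM ℝ F)
  have hG2 : ∀ z, G2 z = 𝓕 (⇑F) (Tlin (eqv.symm z)) := fun _ => rfl
  have hbound : ∀ r : ℝ, ‖Complex.exp (-Complex.I * (r:ℂ))‖ = 1 := by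
    intro r
    rw [Complex.norm_exp]
    simp [Complex.mul_re]
  have hint1 : ∀ y : Fin (2 * n) → ℝ, Integrable (fun z : Fin (2 * n) → ℝ =>
      hodgeTransform g (⇑f) z *
        Complex.exp (-Complex.I * ((∑ i, z i * g.mulVec y i : ℝ) : ℂ))) := by
    intro y
    have hcont : Continuous fun z : Fin (2*n) → ℝ =>
        Complex.exp (-Complex.I * ((∑ i, z i * g.mulVec y i : ℝ) : ℂ)) := by fun_prop
    have hintG : Integrable (fun z : Fin (2*n) → ℝ =>
        ((((2 * Real.pi) ^ n)⁻¹ : ℝ) : ℂ) * ((Real.sqrt |g.det| : ℝ) : ℂ) * G2 z) :=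
      G2.integrable.const_mul _
    have hprod := Integrable.bdd_mul hintG hcont.aestronglyMeasurable
      (Filter.Eventually.of_forall fun z => le_of_eq (hbound _))
    refine hprod.congr ?_
    refine Filter.Eventually.of_forall fun z => ?_
    dsimp only
    rw [key z, hG2 z]
    ring
  refine ⟨hint1, fun y => ?_⟩
  -- main identity
  have expand : hodgeTransform g (hodgeTransform g ⇑f) y =
      ((((2 * Real.pi) ^ n)⁻¹ : ℝ) : ℂ) * ((Real.sqrt |g.det| : ℝ) : ℂ) *
        ∫ z : Fin (2*n) → ℝ, hodgeTransform g ⇑f z *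
          Complex.exp (-Complex.I * ((∑ i, z i * g.mulVec y i : ℝ) : ℂ)) := rfl
  rw [expand,
    aux_integral_pi (fun z => hodgeTransform g ⇑f z *
      Complex.exp (-Complex.I * ((∑ i, z i * g.mulVec y i : ℝ) : ℂ)))]
  have hpt : ∀ v : E,
      hodgeTransform g ⇑f (((MeasurableEquiv.toLp 2 (Fin (2*n) → ℝ)).symm) v) *
        Complex.exp (-Complex.I *
          ((∑ i, ((MeasurableEquiv.toLp 2 (Fin (2*n) → ℝ)).symm) v i * g.mulVec y i : ℝ) : ℂ)) =
      ((((2 * Real.pi) ^ n)⁻¹ : ℝ) : ℂ) * ((Real.sqrt |g.det| : ℝ) : ℂ) *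
        ((fun w : E => Complex.exp (((2 * Real.pi * ⟪w, eqv.symm y⟫ : ℝ) : ℂ) * Complex.I) •
          𝓕 (⇑F) w) (T v)) := by
    intro v
    have hsymm : (eqv.symm (((MeasurableEquiv.toLp 2 (Fin (2*n) → ℝ)).symm) v) : E) = v := rfl
    rw [key (((MeasurableEquiv.toLp 2 (Fin (2*n) → ℝ)).symm) v), hsymm]
    have hco1 : ∀ (u : Fin (2*n) → ℝ) (i : Fin (2*n)), (eqv.symm u : E) i = u i := fun _ _ => rfl
    have hco2 : ∀ (w : E) (i : Fin (2*n)),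
        eqv w i = ((MeasurableEquiv.toLp 2 (Fin (2*n) → ℝ)).symm) w i := fun _ _ => rfl
    have hexp : 2 * Real.pi * ⟪Tlin v, eqv.symm y⟫ =
        -∑ i, ((MeasurableEquiv.toLp 2 (Fin (2*n) → ℝ)).symm) v i * g.mulVec y i := by
      rw [hTy' v, real_inner_smul_left, hinner]
      simp only [hco1]
      rw [hskew2]
      simp only [hco2]
      rw [← mul_assoc, mul_inv_cancel₀ hpi.ne', one_mul]
    simp only [hT, hexp, smul_eq_mul]
    push_cast
    ring_nf
  have hIeq : (∫ v : E, hodgeTransform g ⇑f (((MeasurableEquiv.toLp 2 (Fin (2*n) → ℝ)).symm) v) *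
        Complex.exp (-Complex.I *
          ((∑ i, ((MeasurableEquiv.toLp 2 (Fin (2*n) → ℝ)).symm) v i * g.mulVec y i : ℝ) : ℂ)))
      = ∫ v : E, ((((2 * Real.pi) ^ n)⁻¹ : ℝ) : ℂ) * ((Real.sqrt |g.det| : ℝ) : ℂ) *
          ((fun w : E => Complex.exp (((2 * Real.pi * ⟪w, eqv.symm y⟫ : ℝ) : ℂ) * Complex.I) •
            𝓕 (⇑F) w) (T v)) :=
    congrArg (fun h : E → ℂ => ∫ v, h v) (funext hpt)
  rw [hIeq, integral_const_mul,
    aux_integral_comp_cle volume T (fun w : E =>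
      Complex.exp (((2 * Real.pi * ⟪w, eqv.symm y⟫ : ℝ) : ℂ) * Complex.I) • 𝓕 (⇑F) w),
    hTcoe, ← Real.fourierInv_eq']
  have hFhatInt : Integrable (𝓕 (⇑F)) := (SchwartzMap.fourierTransformCLM ℝ F).integrable
  have hinv : 𝓕⁻ (𝓕 ⇑F) (eqv.symm y) = F (eqv.symm y) :=
    MeasureTheory.Integrable.fourierInv_fourier_eq F.integrable hFhatInt F.continuous.continuousAt
  rw [hinv, hF, eqv.apply_symm_apply]
  -- constants
  have hb : Real.sqrt |g.det| * Real.sqrt |g.det| = |g.det| := Real.mul_self_sqrt (abs_nonneg _)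
  have habs : |LinearMap.det Tlin| = ((2*Real.pi)⁻¹) ^ (2*n) * |g.det| := by
    rw [hTdet, abs_mul, abs_pow, abs_of_pos (inv_pos.2 hpi)]
  have h2n : (((2*Real.pi)⁻¹) ^ (2*n) : ℝ) = ((((2 * Real.pi) ^ n)⁻¹)^2 : ℝ) := by
    rw [← inv_pow, ← pow_mul, mul_comm 2 n]
  have hp0 : (((2 * Real.pi) ^ n)⁻¹ : ℝ) ≠ 0 := inv_ne_zero (pow_ne_zero _ hpi.ne')
  have hd0 : |g.det| ≠ 0 := abs_ne_zero.mpr hdet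
  have hcoef : (((2 * Real.pi) ^ n)⁻¹ : ℝ) * (Real.sqrt |g.det|) *
      ((((2 * Real.pi) ^ n)⁻¹ : ℝ) * (Real.sqrt |g.det|)) * (|LinearMap.det Tlin|)⁻¹ = 1 := by
    rw [habs, h2n]
    calc (((2 * Real.pi) ^ n)⁻¹ : ℝ) * (Real.sqrt |g.det|) *
        ((((2 * Real.pi) ^ n)⁻¹ : ℝ) * (Real.sqrt |g.det|)) *
          ((((2 * Real.pi) ^ n)⁻¹ : ℝ) ^ 2 * |g.det|)⁻¹
        = ((((2 * Real.pi) ^ n)⁻¹ : ℝ) ^ 2 * (Real.sqrt |g.det| * Real.sqrt |g.det|)) *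
            ((((2 * Real.pi) ^ n)⁻¹ : ℝ) ^ 2 * |g.det|)⁻¹ := by ring
      _ = ((((2 * Real.pi) ^ n)⁻¹ : ℝ) ^ 2 * |g.det|) *
            ((((2 * Real.pi) ^ n)⁻¹ : ℝ) ^ 2 * |g.det|)⁻¹ := by rw [hb]
      _ = 1 := mul_inv_cancel₀ (mul_ne_zero (pow_ne_zero 2 hp0) hd0)
  calc ((((2 * Real.pi) ^ n)⁻¹ : ℝ) : ℂ) * ((Real.sqrt |g.det| : ℝ) : ℂ) *
      (((((2 * Real.pi) ^ n)⁻¹ : ℝ) : ℂ) * ((Real.sqrt |g.det| : ℝ) : ℂ) *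
        ((|LinearMap.det Tlin|⁻¹ : ℝ) • (f y)))
      = (((((2 * Real.pi) ^ n)⁻¹ : ℝ) * (Real.sqrt |g.det|) *
          ((((2 * Real.pi) ^ n)⁻¹ : ℝ) * (Real.sqrt |g.det|)) *
            (|LinearMap.det Tlin|)⁻¹ : ℝ) : ℂ) * f y := by
        rw [Complex.real_smul]; push_cast; ring
    _ = f y := by rw [hcoef, Complex.ofReal_one, one_mul]
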